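/- With the weighting kernel π_Rem(S) = 1 if |S| ≥ d−1 and 0 otherwise, the unique minimizers of the weighted least squares objective Σ_{S⊆D} π_Rem(S)(b_0 + Σ_{i∈S} b_i − u(S))² are a_i = u(D) − u(D\{i}) for each i and a_0 = u(D) − Σ_{i∈D} a_i. -/
import Mathlib


open Finset

/-- Weighted least squares objective with the "remove individual" kernel
`π_Rem(S) = 1` if `|S| ≥ d - 1` and `0` otherwise. -/
noncomputable def wlsRemObjective (d : ℕ) (u : Finset (Fin d) → ℝ)
    (b0 : ℝ) (b : Fin d → ℝ) : ℝ :=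
  ∑ S ∈ (univ : Finset (Fin d)).powerset,
    (if d - 1 ≤ S.card then (1 : ℝ) else 0) * (b0 + ∑ i ∈ S, b i - u S) ^ 2

lemma cover_lemma (d : ℕ) (hd : 1 ≤ d) (S : Finset (Fin d)) (h : d - 1 ≤ S.card) :
    S = univ ∨ ∃ i : Fin d, S = univ \ {i} := by
  have hle : S.card ≤ d := by simpa using S.card_le_univ
  rcases eq_or_lt_of_le hle with heq | hlt
  · left
    exact Finset.eq_univ_of_card S (by simpa using heq)
  · right
    have hcard : S.card = d - 1 := le_antisymm (by omega) h
    have hc : ((univ : Finset (Fin d)) \ S).card = 1 := by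
      rw [Finset.card_sdiff_of_subset (Finset.subset_univ S)]
      simp [hcard]
      omega
    obtain ⟨i, hi⟩ := Finset.card_eq_one.mp hc
    refine ⟨i, ?_⟩
    have := Finset.sdiff_sdiff_eq_self (Finset.subset_univ S)
    rw [hi] at this
    exact this.symm

/-- With the kernel `π_Rem`, the unique minimizers of the weighted least squares objective
are `aᵢ = u(D) - u(D \ {i})` and `a₀ = u(D) - Σ_{i ∈ D} aᵢ`. -/
theorem wls_remove_individual (d : ℕ) (hd : 1 ≤ d) (u : Finset (Fin d) → ℝ)
    (a0 : ℝ) (a : Fin d → ℝ)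
    (ha : ∀ i : Fin d, a i = u univ - u (univ \ {i}))
    (ha0 : a0 = u univ - ∑ i : Fin d, a i) :
    ∀ b0 : ℝ, ∀ b : Fin d → ℝ,
      wlsRemObjective d u a0 a ≤ wlsRemObjective d u b0 b ∧
      (wlsRemObjective d u b0 b = wlsRemObjective d u a0 a → b0 = a0 ∧ ∀ i, b i = a i) := by
  intro b0 b
  have hfit : ∀ S : Finset (Fin d), d - 1 ≤ S.card → a0 + ∑ i ∈ S, a i = u S := by
    intro S hS
    rcases cover_lemma d hd S hS with rfl | ⟨i, rfl⟩
    · rw [ha0]; ring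
    · rw [Finset.sum_sdiff_eq_sub (Finset.subset_univ _), ha0, Finset.sum_singleton, ha i]
      ring
  have hA : wlsRemObjective d u a0 a = 0 := by
    apply Finset.sum_eq_zero
    intro S hS
    by_cases h : d - 1 ≤ S.card
    · simp [h, sub_eq_zero.mpr (hfit S h)]
    · simp [h]
  have hnonneg : ∀ S ∈ (univ : Finset (Fin d)).powerset,
      0 ≤ (if d - 1 ≤ S.card then (1 : ℝ) else 0) * (b0 + ∑ i ∈ S, b i - u S) ^ 2 := by
    intro S _
    positivity
  have hBnn : 0 ≤ wlsRemObjective d u b0 b := Finset.sum_nonneg hnonneg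
  constructor
  · rw [hA]; exact hBnn
  · intro hEq
    rw [hA] at hEq
    have hzero := (Finset.sum_eq_zero_iff_of_nonneg hnonneg).mp hEq
    have hfitb : ∀ S : Finset (Fin d), d - 1 ≤ S.card → b0 + ∑ i ∈ S, b i = u S := by
      intro S hS
      have := hzero S (Finset.mem_powerset.mpr (Finset.subset_univ S))
      rw [if_pos hS, one_mul] at this
      have := pow_eq_zero_iff (n := 2) (by norm_num) |>.mp this
      linarith
    have huniv : b0 + ∑ i : Fin d, b i = u univ := by
      apply hfitb; simp
    have hbi : ∀ i : Fin d, b i = a i := by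
      intro i
      have h1 : b0 + ∑ j ∈ univ \ {i}, b j = u (univ \ {i}) := by
        apply hfitb
        rw [Finset.card_sdiff_of_subset (Finset.subset_univ _)]
        simp
      rw [Finset.sum_sdiff_eq_sub (Finset.subset_univ _), Finset.sum_singleton] at h1
      rw [ha i]
      linarith
    refine ⟨?_, hbi⟩
    have : ∑ i : Fin d, b i = ∑ i : Fin d, a i := Finset.sum_congr rfl fun i _ => hbi i
    rw [ha0]
    linarith [this ▸ huniv]
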